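/- If the singular values of Z follow an exact power law σ_k = C k^{−α} for k = 1, …, m with α ≥ 0 and C > 0, then RankMe(Z) depends only on α and m, is equal to m when α = 0, and is strictly decreasing in α; in particular as α → ∞, RankMe(Z) → 1. -/

import Mathlib

open Matrix BigOperators Real Filter

theorem Matrix.isHermitian_transpose_mul_self {m n : Type*} [Fintype m]
    (A : Matrix m n ℝ) : (Aᵀ * A).IsHermitian := by
  simpa using Matrix.isHermitian_conjTranspose_mul_self A

/-- Singular values of a real `N × C` matrix, in decreasing order
(indexed by `Fin C`; trailing entries are `0` when `N < C`). -/
noncomputable def singularValues {N C : ℕ} (Y : Matrix (Fin N) (Fin C) ℝ) : Fin C → ℝ :=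
  fun i =>
    Real.sqrt ((((Matrix.isHermitian_transpose_mul_self Y).eigenvalues) ∘
      Tuple.sort ((Matrix.isHermitian_transpose_mul_self Y).eigenvalues)) i.rev)

/-- Squared Frobenius norm. -/
noncomputable def frobSq {N C : ℕ} (A : Matrix (Fin N) (Fin C) ℝ) : ℝ :=
  ∑ i, ∑ j, (A i j) ^ 2

/-- The RankMe effective rank: exponential of the Shannon entropy of the
normalized singular value distribution (with the convention `0 * log 0 = 0`). -/
noncomputable def rankMe {N C : ℕ} (Z : Matrix (Fin N) (Fin C) ℝ) : ℝ :=
  Real.exp (∑ k, Real.negMulLog (singularValues Z k / ∑ j, singularValues Z j))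

/-- The `N × C` matrix `𝟙 bᵀ` whose every row is `bᵀ`. -/
def onesOuter (N : ℕ) {C : ℕ} (b : Fin C → ℝ) : Matrix (Fin N) (Fin C) ℝ :=
  Matrix.of fun _ j => b j

/-- Effective rank of an exact power-law spectrum `σ_k = C k^{-α}` on `m` atoms. -/
noncomputable def powerLawRankMe (m : ℕ) (α : ℝ) : ℝ :=
  Real.exp (∑ k : Fin m,
    Real.negMulLog ((((k : ℕ) + 1 : ℝ) ^ (-α)) / ∑ j : Fin m, (((j : ℕ) + 1 : ℝ) ^ (-α))))

namespace RankMeAux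

noncomputable def cc (k : ℕ) : ℝ := Real.log (k + 1)

noncomputable def w (α : ℝ) (k : ℕ) : ℝ := Real.exp (-(α * cc k))

noncomputable def S (m : ℕ) (α : ℝ) : ℝ := ∑ k : Fin m, w α k
noncomputable def T (m : ℕ) (α : ℝ) : ℝ := ∑ k : Fin m, cc k * w α k
noncomputable def U (m : ℕ) (α : ℝ) : ℝ := ∑ k : Fin m, cc k ^ 2 * w α k

noncomputable def H (m : ℕ) (α : ℝ) : ℝ := α * T m α / S m α + Real.log (S m α)

lemma cc_nonneg (k : ℕ) : 0 ≤ cc k := by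
  have : (1:ℝ) ≤ k + 1 := le_add_of_nonneg_left (Nat.cast_nonneg k)
  exact Real.log_nonneg this

lemma cc_zero : cc 0 = 0 := by simp [cc]

lemma cc_pos {k : ℕ} (hk : 1 ≤ k) : 0 < cc k := by
  have : (1:ℝ) < (k:ℝ) + 1 := by
    have : (1:ℝ) ≤ (k:ℝ) := by exact_mod_cast hk
    linarith
  exact Real.log_pos this

lemma w_pos (α : ℝ) (k : ℕ) : 0 < w α k := Real.exp_pos _

lemma S_pos (m : ℕ) (hm : 0 < m) (α : ℝ) : 0 < S m α :=
  Finset.sum_pos (fun k _ => w_pos α k) (by simp [Finset.univ_nonempty_iff, Fin.pos_iff_nonempty.mp hm])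

lemma rpow_eq_w (α : ℝ) (k : ℕ) : ((k : ℝ) + 1) ^ (-α) = w α k := by
  have hpos : (0:ℝ) < (k:ℝ) + 1 := by positivity
  rw [Real.rpow_def_of_pos hpos, w, cc]
  ring_nf

lemma powerLawRankMe_eq (m : ℕ) (hm : 0 < m) (α : ℝ) :
    Real.exp (∑ k : Fin m,
      Real.negMulLog ((((k : ℕ) + 1 : ℝ) ^ (-α)) / ∑ j : Fin m, (((j : ℕ) + 1 : ℝ) ^ (-α))))
      = Real.exp (H m α) := by
  congr 1
  simp only [rpow_eq_w]
  have hS : (0:ℝ) < S m α := S_pos m hm α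
  have hsum : (∑ j : Fin m, w α (j : ℕ)) = S m α := rfl
  rw [hsum]
  have hterm : ∀ k : Fin m, Real.negMulLog (w α k / S m α)
      = α * (cc k * w α k) / S m α + (w α k / S m α) * Real.log (S m α) := by
    intro k
    rw [Real.negMulLog, Real.log_div (w_pos α k).ne' hS.ne', w, Real.log_exp]
    field_simp
    ring
  rw [Finset.sum_congr rfl (fun k _ => hterm k), Finset.sum_add_distrib, H]
  congr 1
  · rw [← Finset.sum_div, ← Finset.mul_sum, T]
  · rw [← Finset.sum_mul, ← Finset.sum_div, hsum, div_self hS.ne', one_mul]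

lemma hasDerivAt_w (k : ℕ) (α : ℝ) : HasDerivAt (fun a => w a k) (-(cc k * w α k)) α := by
  have h1 : HasDerivAt (fun a : ℝ => -(a * cc k)) (-(cc k)) α := by
    simpa using ((hasDerivAt_id α).mul_const (cc k)).fun_neg
  simpa [w, mul_comm] using h1.exp

lemma hasDerivAt_S (m : ℕ) (α : ℝ) : HasDerivAt (S m) (-(T m α)) α := by
  have := HasDerivAt.fun_sum (u := (Finset.univ : Finset (Fin m)))
    (fun k _ => hasDerivAt_w (k : ℕ) α)
  have h : HasDerivAt (S m) _ α := this
  simpa [S, T, Finset.sum_neg_distrib] using h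

lemma hasDerivAt_T (m : ℕ) (α : ℝ) : HasDerivAt (T m) (-(U m α)) α := by
  have := HasDerivAt.fun_sum (u := (Finset.univ : Finset (Fin m)))
    (fun k (_ : k ∈ Finset.univ) => ((hasDerivAt_w (k : ℕ) α).const_mul (cc (k : ℕ))))
  have h2 : ∀ k : Fin m, cc (k:ℕ) * -(cc (k:ℕ) * w α (k:ℕ)) = -(cc (k:ℕ)^2 * w α (k:ℕ)) := by
    intro k; ring
  have h : HasDerivAt (T m) _ α := this
  simpa [T, U, h2, Finset.sum_neg_distrib] using h

noncomputable def D (m : ℕ) (α : ℝ) : ℝ := α * (T m α ^ 2 - U m α * S m α) / S m α ^ 2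

lemma hasDerivAt_H (m : ℕ) (hm : 0 < m) (α : ℝ) : HasDerivAt (H m) (D m α) α := by
  have hS := S_pos m hm α
  have h1 : HasDerivAt (fun a => a * T m a) (1 * T m α + α * -(U m α)) α :=
    (hasDerivAt_id α).mul (hasDerivAt_T m α)
  have h2 : HasDerivAt (fun a => a * T m a / S m a)
      (((1 * T m α + α * -(U m α)) * S m α - α * T m α * -(T m α)) / S m α ^ 2) α :=
    h1.div (hasDerivAt_S m α) hS.ne'
  have h3 : HasDerivAt (fun a => Real.log (S m a)) (-(T m α) / S m α) α :=
    (hasDerivAt_S m α).log hS.ne'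
  have := h2.fun_add h3
  have h' : HasDerivAt (H m) _ α := this
  convert h' using 1
  rw [D]
  field_simp
  ring

lemma lagrange (m : ℕ) (α : ℝ) :
    2 * (U m α * S m α - T m α ^ 2)
      = ∑ j : Fin m, ∑ k : Fin m, (cc j - cc k) ^ 2 * (w α j * w α k) := by
  have hUS : U m α * S m α = ∑ j : Fin m, ∑ k : Fin m, cc (j:ℕ)^2 * w α j * w α k :=
    Finset.sum_mul_sum _ _ _ _
  have hSU : S m α * U m α = ∑ j : Fin m, ∑ k : Fin m, w α j * (cc (k:ℕ)^2 * w α k) :=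
    Finset.sum_mul_sum _ _ _ _
  have hT2 : T m α * T m α = ∑ j : Fin m, ∑ k : Fin m, (cc (j:ℕ) * w α j) * (cc (k:ℕ) * w α k) :=
    Finset.sum_mul_sum _ _ _ _
  have : 2 * (U m α * S m α - T m α ^ 2)
      = U m α * S m α + S m α * U m α - 2 * (T m α * T m α) := by ring
  rw [this, hUS, hSU, hT2, Finset.mul_sum, ← Finset.sum_add_distrib, ← Finset.sum_sub_distrib]
  refine Finset.sum_congr rfl fun j _ => ?_
  rw [Finset.mul_sum, ← Finset.sum_add_distrib, ← Finset.sum_sub_distrib]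
  refine Finset.sum_congr rfl fun k _ => ?_
  ring

lemma cauchy_strict (m : ℕ) (hm : 2 ≤ m) (α : ℝ) : T m α ^ 2 < U m α * S m α := by
  have h2 : 0 < 2 * (U m α * S m α - T m α ^ 2) := by
    rw [lagrange]
    have h0 : (0 : ℕ) < m := by omega
    have h1 : (1 : ℕ) < m := by omega
    have hnn : ∀ j k : Fin m, 0 ≤ (cc (j:ℕ) - cc (k:ℕ)) ^ 2 * (w α (j:ℕ) * w α (k:ℕ)) :=
      fun j k => mul_nonneg (sq_nonneg _) (le_of_lt (mul_pos (w_pos _ _) (w_pos _ _)))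
    refine Finset.sum_pos' (fun j _ => Finset.sum_nonneg fun k _ => hnn j k) ?_
    refine ⟨⟨1, h1⟩, Finset.mem_univ _, ?_⟩
    refine Finset.sum_pos' (fun k _ => hnn _ k) ⟨⟨0, h0⟩, Finset.mem_univ _, ?_⟩
    have hne : cc 1 - cc 0 ≠ 0 := by
      rw [cc_zero, sub_zero]; exact (cc_pos le_rfl).ne'
    simp only [Fin.val_mk]
    exact mul_pos (by positivity) (mul_pos (w_pos _ _) (w_pos _ _))
  linarith

lemma D_neg (m : ℕ) (hm : 2 ≤ m) {α : ℝ} (hα : 0 < α) : D m α < 0 := by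
  have hS := S_pos m (by omega) α
  have := cauchy_strict m hm α
  rw [D]
  apply div_neg_of_neg_of_pos
  · have : T m α ^ 2 - U m α * S m α < 0 := by linarith
    exact mul_neg_of_pos_of_neg hα this
  · positivity

lemma strictAntiOn_H (m : ℕ) (hm : 2 ≤ m) : StrictAntiOn (H m) (Set.Ici (0:ℝ)) := by
  have hm0 : 0 < m := by omega
  apply strictAntiOn_of_deriv_neg (convex_Ici 0)
  · exact fun x _ => (hasDerivAt_H m hm0 x).continuousAt.continuousWithinAt
  · intro x hx
    rw [interior_Ici] at hx
    rw [(hasDerivAt_H m hm0 x).deriv]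
    exact D_neg m hm hx

lemma tendsto_S (m : ℕ) (hm : 0 < m) : Tendsto (S m) atTop (nhds 1) := by
  have h : Tendsto (S m) atTop
      (nhds (∑ k : Fin m, if k = (⟨0, hm⟩ : Fin m) then (1:ℝ) else 0)) := by
    apply tendsto_finset_sum
    intro k _
    by_cases hk : k = (⟨0, hm⟩ : Fin m)
    · subst hk
      simp only [if_pos rfl]
      have : (fun a => w a ((⟨0, hm⟩ : Fin m) : ℕ)) = fun _ => (1:ℝ) := by
        funext a; simp [w, cc_zero]
      rw [this]; exact tendsto_const_nhds
    · simp only [if_neg hk]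
      have hk1 : 1 ≤ (k : ℕ) := by
        rcases Nat.eq_zero_or_pos (k : ℕ) with h0 | h1
        · exact absurd (Fin.ext h0) hk
        · exact h1
      have hc := cc_pos hk1
      have h1 : Tendsto (fun a : ℝ => -(a * cc (k:ℕ))) atTop atBot := by
        apply tendsto_neg_atBot_iff.mpr
        exact Tendsto.atTop_mul_const hc tendsto_id
      exact Real.tendsto_exp_atBot.comp h1
  simpa using h

lemma tendsto_alphaT (m : ℕ) : Tendsto (fun α => α * T m α) atTop (nhds 0) := by
  have heq : ∀ α : ℝ, α * T m α = ∑ k : Fin m, α * (cc (k:ℕ) * w α (k:ℕ)) := by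
    intro α; rw [T, Finset.mul_sum]
  have h : Tendsto (fun α => ∑ k : Fin m, α * (cc (k:ℕ) * w α (k:ℕ))) atTop
      (nhds (∑ _k : Fin m, (0:ℝ))) := by
    apply tendsto_finset_sum
    intro k _
    rcases eq_or_lt_of_le (cc_nonneg (k:ℕ)) with hc | hc
    · have : (fun α : ℝ => α * (cc (k:ℕ) * w α (k:ℕ))) = fun _ => 0 := by
        funext a; rw [← hc]; ring
      rw [this]; exact tendsto_const_nhds
    · have h1 : Tendsto (fun α : ℝ => α * cc (k:ℕ)) atTop atTop :=
        Tendsto.atTop_mul_const hc tendsto_id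
      have h2 := (tendsto_pow_mul_exp_neg_atTop_nhds_zero 1).comp h1
      have : (fun α : ℝ => α * (cc (k:ℕ) * w α (k:ℕ)))
          = (fun x : ℝ => x ^ 1 * Real.exp (-x)) ∘ (fun α : ℝ => α * cc (k:ℕ)) := by
        funext a; simp [w, Function.comp]; ring
      rw [this]; exact h2
  simp only [Finset.sum_const_zero] at h
  exact Tendsto.congr (fun a => (heq a).symm) h

lemma tendsto_H (m : ℕ) (hm : 0 < m) : Tendsto (H m) atTop (nhds 0) := by
  have h1 : Tendsto (fun α => α * T m α / S m α) atTop (nhds (0 / 1)) :=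
    Tendsto.div (tendsto_alphaT m) (tendsto_S m hm) one_ne_zero
  have h2 : Tendsto (fun α => Real.log (S m α)) atTop (nhds (Real.log 1)) :=
    ((Real.continuousAt_log one_ne_zero).tendsto).comp (tendsto_S m hm)
  rw [Real.log_one] at h2
  rw [zero_div] at h1
  have := h1.add h2
  have h : Tendsto (H m) atTop (nhds (0 + 0)) := this
  simpa using h

end RankMeAux

lemma powerLawRankMe_eq' (m : ℕ) (hm : 0 < m) (α : ℝ) :
    powerLawRankMe m α = Real.exp (RankMeAux.H m α) :=
  RankMeAux.powerLawRankMe_eq m hm α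

/-- If the singular values of `Z` follow an exact power law `σ_k = C k^{-α}`, then
`RankMe(Z)` depends only on `α` and `m`, equals `m` at `α = 0`, is strictly decreasing
in `α` (for `m ≥ 2`), and tends to `1` as `α → ∞`. -/
theorem rankMe_power_law {N K : ℕ} (Z : Matrix (Fin N) (Fin K) ℝ) (α Cc : ℝ)
    (hα : 0 ≤ α) (hC : 0 < Cc) (hK : 0 < K)
    (hσ : ∀ k : Fin K, singularValues Z k = Cc * (((k : ℕ) + 1 : ℝ) ^ (-α))) :
    rankMe Z = powerLawRankMe K α ∧
    powerLawRankMe K 0 = (K : ℝ) ∧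
    (2 ≤ K → StrictAntiOn (powerLawRankMe K) (Set.Ici (0 : ℝ))) ∧
    Filter.Tendsto (powerLawRankMe K) Filter.atTop (nhds 1) := by
  refine ⟨?_, ?_, ?_, ?_⟩
  · -- rankMe Z = powerLawRankMe K α
    rw [rankMe, powerLawRankMe]
    congr 1
    refine Finset.sum_congr rfl fun k _ => ?_
    rw [hσ k]
    have hs : (∑ j : Fin K, singularValues Z j)
        = Cc * ∑ j : Fin K, (((j : ℕ) + 1 : ℝ) ^ (-α)) := by
      rw [Finset.mul_sum]
      exact Finset.sum_congr rfl fun j _ => hσ j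
    rw [hs, mul_div_mul_left _ _ hC.ne']
  · -- value at 0
    rw [powerLawRankMe]
    simp only [neg_zero, Real.rpow_zero]
    have hs : (∑ j : Fin K, (1:ℝ)) = K := by simp
    rw [hs]
    have hKpos : (0:ℝ) < K := by exact_mod_cast hK
    have hterm : Real.negMulLog ((1:ℝ) / K) = Real.log K / K := by
      rw [Real.negMulLog, one_div, Real.log_inv]
      field_simp
    rw [Finset.sum_const, Finset.card_univ, Fintype.card_fin, hterm, nsmul_eq_mul]
    rw [mul_div_cancel₀ _ hKpos.ne', Real.exp_log hKpos]
  · -- strict antitonicity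
    intro hK2 a ha b hb hab
    rw [powerLawRankMe_eq' K hK a, powerLawRankMe_eq' K hK b, Real.exp_lt_exp]
    exact RankMeAux.strictAntiOn_H K hK2 ha hb hab
  · -- limit
    have heq : powerLawRankMe K = fun a => Real.exp (RankMeAux.H K a) :=
      funext fun a => powerLawRankMe_eq' K hK a
    rw [heq]
    have := (Real.continuous_exp.continuousAt (x := (0:ℝ))).tendsto.comp
      (RankMeAux.tendsto_H K hK)
    simpa [Function.comp_def, Real.exp_zero] using this
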